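/- Let r ≥ 2 and let S_3 ⊆ F_2^3 × F_2^r × F_2^r be the set S_3 = {((0,0,0), 0_r, 0_r)} ∪ {((0,0,1), h, 0_r) : h ≠ 0} ∪ {((0,1,0), 0_r, 0_r), ((0,1,1), 0_r, 0_r)} ∪ {((1,0,0), 0_r, h) : h ≠ 0} ∪ {((1,0,1), h, 0_r) : h ≠ 0} ∪ {((1,1,0), 0_r, 0_r), ((1,1,1), 0_r, 0_r)} (the set of columns of the parity-check matrix H_3). Then the simple graph G_3 on vertex set F_2^3 × F_2^r × F_2^r, in which distinct vertices x and y are adjacent if and only if x + y ∈ S_3, is connected and triangle-free (contains no 3-clique). -/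

import Mathlib

/-- Membership in the generator set `S₃`: the set of columns of the parity-check
matrix `H₃`. -/
def inS3 {r : ℕ}
    (p : (ZMod 2 × ZMod 2 × ZMod 2) × (Fin r → ZMod 2) × (Fin r → ZMod 2)) : Prop :=
  (p.1 = (0, 0, 0) ∧ p.2.1 = 0 ∧ p.2.2 = 0) ∨
  (p.1 = (0, 0, 1) ∧ p.2.1 ≠ 0 ∧ p.2.2 = 0) ∨
  (p.1 = (0, 1, 0) ∧ p.2.1 = 0 ∧ p.2.2 = 0) ∨
  (p.1 = (0, 1, 1) ∧ p.2.1 = 0 ∧ p.2.2 = 0) ∨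
  (p.1 = (1, 0, 0) ∧ p.2.1 = 0 ∧ p.2.2 ≠ 0) ∨
  (p.1 = (1, 0, 1) ∧ p.2.1 ≠ 0 ∧ p.2.2 = 0) ∨
  (p.1 = (1, 1, 0) ∧ p.2.1 = 0 ∧ p.2.2 = 0) ∨
  (p.1 = (1, 1, 1) ∧ p.2.1 = 0 ∧ p.2.2 = 0)

abbrev Vx (r : ℕ) := (ZMod 2 × ZMod 2 × ZMod 2) × (Fin r → ZMod 2) × (Fin r → ZMod 2)

lemma add_self_z (x : ZMod 2) : x + x = 0 := by fin_cases x <;> rfl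
lemma z1 (c : ZMod 2) : c + (c + 1) = 1 := by fin_cases c <;> rfl
lemma z2 (c : ZMod 2) : (c + 1) + c = 1 := by fin_cases c <;> rfl

lemma add_self_f {r : ℕ} (u : Fin r → ZMod 2) : u + u = 0 :=
  funext fun i => add_self_z (u i)

lemma f1 {r : ℕ} (u e : Fin r → ZMod 2) : u + (u + e) = e := by
  rw [← add_assoc, add_self_f, zero_add]

lemma add_eq_zero_iff_f {r : ℕ} (a b : Fin r → ZMod 2) : a + b = 0 ↔ a = b := by
  constructor
  · intro h
    have h2 : a + (b + b) = (a + b) + b := (add_assoc a b b).symm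
    rw [add_self_f, add_zero, h, zero_add] at h2
    exact h2
  · rintro rfl; exact add_self_f a

lemma exists_aux {r : ℕ} (hr : 2 ≤ r) (u : Fin r → ZMod 2) :
    ∃ e : Fin r → ZMod 2, e ≠ 0 ∧ u + e ≠ 0 := by
  have h0 : (0 : ℕ) < r := by omega
  have h1 : (1 : ℕ) < r := by omega
  set g0 : Fin r → ZMod 2 := Pi.single ⟨0, h0⟩ 1 with hg0
  set g1 : Fin r → ZMod 2 := Pi.single ⟨1, h1⟩ 1 with hg1
  have hg0ne : g0 ≠ 0 := by
    intro h; have := congrFun h ⟨0, h0⟩; simp [hg0] at this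
  have hg1ne : g1 ≠ 0 := by
    intro h; have := congrFun h ⟨1, h1⟩; simp [hg1] at this
  have hne : g0 ≠ g1 := by
    intro h
    have := congrFun h ⟨0, h0⟩
    rw [hg0, hg1] at this
    rw [Pi.single_eq_same, Pi.single_eq_of_ne (by simp [Fin.ext_iff])] at this
    exact one_ne_zero this
  by_cases h : u = g0
  · refine ⟨g1, hg1ne, fun hh => hne ?_⟩
    rw [← h]; exact (add_eq_zero_iff_f u g1).mp hh
  · refine ⟨g0, hg0ne, fun hh => h ((add_eq_zero_iff_f u g0).mp hh)⟩

section Reach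
variable {r : ℕ} {G : SimpleGraph (Vx r)}

lemma reach' (hG : ∀ x y, G.Adj x y ↔ x ≠ y ∧ inS3 (x + y)) (x y : Vx r) (hne : x ≠ y) (h : inS3 (x + y)) : G.Reachable x y :=
  ((hG x y).mpr ⟨hne, h⟩).reachable

lemma reach_zero (hG : ∀ x y, G.Adj x y ↔ x ≠ y ∧ inS3 (x + y)) (hr : 2 ≤ r) (x : Vx r) : G.Reachable x 0 := by
  obtain ⟨⟨a, b, c⟩, u, v⟩ := x
  obtain ⟨e, he0, heu⟩ := exists_aux hr u
  obtain ⟨f, hf0, hfv⟩ := exists_aux hr v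
  have h01 : G.Reachable (((a,b,c),u,v) : Vx r) (((a,b,c+1),u+e,v)) := by
    refine reach' hG _ _ ?_ ?_
    · simp [Prod.ext_iff]
    · have hs : (((a,b,c),u,v) : Vx r) + ((a,b,c+1),u+e,v) = ((0,0,1),e,0) := by
        simp [Prod.ext_iff, add_self_z, add_self_f, z1, f1]
      rw [hs]
      exact Or.inr (Or.inl ⟨rfl, he0, rfl⟩)
  have h12 : G.Reachable ((((a,b,c+1),u+e,v)) : Vx r) (((a,b,c),0,v)) := by
    refine reach' hG _ _ ?_ ?_
    · simp [Prod.ext_iff]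
    · have hs : ((((a,b,c+1),u+e,v)) : Vx r) + ((a,b,c),0,v) = ((0,0,1),u+e,0) := by
        simp [Prod.ext_iff, add_self_z, add_self_f, z2]
      rw [hs]
      exact Or.inr (Or.inl ⟨rfl, heu, rfl⟩)
  have h23 : G.Reachable ((((a,b,c),0,v)) : Vx r) (((a+1,b,c),0,v+f)) := by
    refine reach' hG _ _ ?_ ?_
    · simp [Prod.ext_iff]
    · have hs : ((((a,b,c),0,v)) : Vx r) + ((a+1,b,c),0,v+f) = ((1,0,0),0,f) := by
        simp [Prod.ext_iff, add_self_z, add_self_f, z1, f1]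
      rw [hs]
      exact Or.inr (Or.inr (Or.inr (Or.inr (Or.inl ⟨rfl, rfl, hf0⟩))))
  have h34 : G.Reachable ((((a+1,b,c),0,v+f)) : Vx r) (((a,b,c),0,0)) := by
    refine reach' hG _ _ ?_ ?_
    · simp [Prod.ext_iff]
    · have hs : ((((a+1,b,c),0,v+f)) : Vx r) + ((a,b,c),0,0) = ((1,0,0),0,v+f) := by
        simp [Prod.ext_iff, add_self_z, add_self_f, z2]
      rw [hs]
      exact Or.inr (Or.inr (Or.inr (Or.inr (Or.inl ⟨rfl, rfl, hfv⟩))))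
  have hstep : ∀ a c : ZMod 2, G.Reachable (((a,1,c),0,0) : Vx r) 0 := by
    intro a c
    refine reach' hG _ _ ?_ ?_
    · simp [Prod.ext_iff]
    · rw [add_zero]
      fin_cases a <;> fin_cases c <;> simp [inS3] <;> decide
  have hb : ∀ b : ZMod 2, b = 0 ∨ b = 1 := by decide
  have h40 : G.Reachable ((((a,b,c),0,0)) : Vx r) 0 := by
    rcases hb b with rfl | rfl
    · refine SimpleGraph.Reachable.trans ?_ (hstep a c)
      refine reach' hG _ _ ?_ ?_
      · simp [Prod.ext_iff]
      · have hs : ((((a,0,c),0,0)) : Vx r) + ((a,1,c),0,0) = ((0,1,0),0,0) := by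
          simp [Prod.ext_iff, add_self_z, add_self_f]
        rw [hs]
        exact Or.inr (Or.inr (Or.inl ⟨rfl, rfl, rfl⟩))
    · exact hstep a c
  exact (((h01.trans h12).trans h23).trans h34).trans h40

end Reach

lemma add_self_V {r : ℕ} (x : Vx r) : x + x = 0 := by
  obtain ⟨⟨a, b, c⟩, u, v⟩ := x
  simp [Prod.ext_iff, add_self_z, add_self_f]

lemma add_eq_zero_iff_V {r : ℕ} (a b : Vx r) : a + b = 0 ↔ a = b := by
  constructor
  · intro h
    have h2 : a + (b + b) = (a + b) + b := (add_assoc a b b).symm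
    rw [add_self_V, add_zero, h, zero_add] at h2
    exact h2
  · rintro rfl; exact add_self_V a

lemma one_add_one_z : (1 : ZMod 2) + 1 = 0 := rfl

lemma key {r : ℕ} (d1 d2 : Vx r) (h1 : inS3 d1) (h2 : inS3 d2)
    (h3 : inS3 (d1 + d2)) : d1 = 0 ∨ d2 = 0 ∨ d1 + d2 = 0 := by
  obtain ⟨⟨a1, b1, c1⟩, u1, v1⟩ := d1
  obtain ⟨⟨a2, b2, c2⟩, u2, v2⟩ := d2
  simp only [inS3, Prod.mk_add_mk, Prod.mk.injEq, Prod.mk_eq_zero] at h1 h2 h3 ⊢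
  rcases h1 with ⟨⟨rfl,rfl,rfl⟩,rfl,rfl⟩|⟨⟨rfl,rfl,rfl⟩,hu1,rfl⟩|⟨⟨rfl,rfl,rfl⟩,rfl,rfl⟩|⟨⟨rfl,rfl,rfl⟩,rfl,rfl⟩|⟨⟨rfl,rfl,rfl⟩,rfl,hv1⟩|⟨⟨rfl,rfl,rfl⟩,hu1,rfl⟩|⟨⟨rfl,rfl,rfl⟩,rfl,rfl⟩|⟨⟨rfl,rfl,rfl⟩,rfl,rfl⟩ <;>
  rcases h2 with ⟨⟨rfl,rfl,rfl⟩,rfl,rfl⟩|⟨⟨rfl,rfl,rfl⟩,hu2,rfl⟩|⟨⟨rfl,rfl,rfl⟩,rfl,rfl⟩|⟨⟨rfl,rfl,rfl⟩,rfl,rfl⟩|⟨⟨rfl,rfl,rfl⟩,rfl,hv2⟩|⟨⟨rfl,rfl,rfl⟩,hu2,rfl⟩|⟨⟨rfl,rfl,rfl⟩,rfl,rfl⟩|⟨⟨rfl,rfl,rfl⟩,rfl,rfl⟩ <;>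
  simp_all [one_add_one_z, add_self_f]

theorem connected_and_triangle_free_G3 (r : ℕ) (hr : 2 ≤ r)
    (G : SimpleGraph ((ZMod 2 × ZMod 2 × ZMod 2) × (Fin r → ZMod 2) × (Fin r → ZMod 2)))
    (hG : ∀ x y, G.Adj x y ↔ x ≠ y ∧ inS3 (x + y)) :
    G.Connected ∧ G.CliqueFree 3 := by
  constructor
  · have hne : Nonempty (Vx r) := ⟨0⟩
    exact SimpleGraph.Connected.mk
      (fun x y => (reach_zero hG hr x).trans (reach_zero hG hr y).symm)
  · intro t ht
    rw [SimpleGraph.is3Clique_iff] at ht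
    obtain ⟨x, y, z, hxy, hxz, hyz, -⟩ := ht
    rw [hG] at hxy hxz hyz
    obtain ⟨hxy1, hxy2⟩ := hxy
    obtain ⟨hxz1, hxz2⟩ := hxz
    obtain ⟨hyz1, hyz2⟩ := hyz
    have hsum : (x + y) + (y + z) = x + z := by
      rw [add_assoc, ← add_assoc y y z, add_self_V, zero_add]
    rcases key (x + y) (y + z) hxy2 hyz2 (by rw [hsum]; exact hxz2) with h | h | h
    · exact hxy1 ((add_eq_zero_iff_V x y).mp h)
    · exact hyz1 ((add_eq_zero_iff_V y z).mp h)
    · rw [hsum] at h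
      exact hxz1 ((add_eq_zero_iff_V x z).mp h)
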